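/- Let (Ω, F, μ) be a probability space, (S_k)_{k≥1} a sequence of nonnegative measurable functions on Ω, (δ_k)_{k≥1} a non-increasing sequence of positive reals with ∑_{k=1}^∞ δ_k = ∞ and ∑_{k=1}^∞ δ_k² < ∞, and C ≥ 0 a constant such that for every k and every t with 0 < t < δ_k one has μ{ω : S_k(ω) < t} ≤ C t². Then for every t > 0, μ{ω : ∑_{k=1}^∞ S_k(ω) < t} = 0; that is, ∑_{k=1}^∞ S_k = ∞ almost surely. -/

import Mathlib

open MeasureTheory Filter

/-- Probabilistic core of Theorem 2.4 (nonexplosion under a weak uniform cover):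
if `μ {S k < t} ≤ C t²` for `0 < t < δ k`, where `δ` is non-increasing, positive,
non-summable, and square-summable, then `∑ₖ S k = ∞` almost surely. -/
theorem sum_eq_top_ae_of_quadratic_small_time_bound
    {Ω : Type*} [MeasurableSpace Ω] (μ : Measure Ω) [IsProbabilityMeasure μ]
    (S : ℕ → Ω → ℝ) (hSmeas : ∀ k, Measurable (S k)) (hSnonneg : ∀ k ω, 0 ≤ S k ω)
    (δ : ℕ → ℝ) (hδanti : Antitone δ) (hδpos : ∀ k, 0 < δ k)
    (hδdiv : ¬ Summable δ) (hδsq : Summable fun k => (δ k) ^ 2)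
    (C : ℝ) (hC : 0 ≤ C)
    (hest : ∀ k, ∀ t : ℝ, 0 < t → t < δ k →
      μ {ω | S k ω < t} ≤ ENNReal.ofReal (C * t ^ 2)) :
    (∀ t : ℝ, 0 < t →
      μ {ω | ∑' k, ENNReal.ofReal (S k ω) < ENNReal.ofReal t} = 0) ∧
    (∀ᵐ ω ∂μ, ∑' k, ENNReal.ofReal (S k ω) = ⊤) := by
  set T : ℝ := ∑' k, (δ k) ^ 2 with hT
  have hTnn : 0 ≤ T := tsum_nonneg fun k => sq_nonneg _
  have hdivg : Tendsto (fun n => ∑ i ∈ Finset.range n, δ i) atTop atTop :=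
    (not_summable_iff_tendsto_nat_atTop_of_nonneg (fun k => (hδpos k).le)).mp hδdiv
  have main : ∀ t : ℝ, 0 < t →
      μ {ω | ∑' k, ENNReal.ofReal (S k ω) < ENNReal.ofReal t} = 0 := by
    intro t ht
    set A := {ω | ∑' k, ENNReal.ofReal (S k ω) < ENNReal.ofReal t} with hA
    have key : ∀ ε : ℝ, 0 < ε → ε < 1 → μ A ≤ ENNReal.ofReal (C * ε ^ 2 * T) := by
      intro ε hε hε1
      obtain ⟨p, hp⟩ := (hdivg.eventually_gt_atTop (t / ε)).exists
      have htsum : t < ε * ∑ i ∈ Finset.range p, δ i := by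
        rw [mul_comm]
        exact (div_lt_iff₀ hε).mp hp
      -- A is covered by the union of the events {S k < ε δ k}
      have hsub : A ⊆ ⋃ k ∈ Finset.range p, {ω | S k ω < ε * δ k} := by
        intro ω hω
        by_contra hcon
        simp only [Set.mem_iUnion, Set.mem_setOf_eq, not_exists, not_lt] at hcon
        have hsumpos : 0 < ε * ∑ i ∈ Finset.range p, δ i := lt_trans ht htsum
        have h1 : ENNReal.ofReal t < ENNReal.ofReal (ε * ∑ i ∈ Finset.range p, δ i) :=
          (ENNReal.ofReal_lt_ofReal_iff hsumpos).mpr htsum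
        have h2 : ENNReal.ofReal (ε * ∑ i ∈ Finset.range p, δ i)
            ≤ ∑' k, ENNReal.ofReal (S k ω) := by
          rw [Finset.mul_sum, ENNReal.ofReal_sum_of_nonneg
            (fun i _ => mul_nonneg hε.le (hδpos i).le)]
          exact le_trans (Finset.sum_le_sum fun i hi =>
            ENNReal.ofReal_le_ofReal (hcon i hi)) (ENNReal.sum_le_tsum _)
        exact absurd (h1.trans_le h2) hω.not_gt
      calc μ A ≤ ∑ k ∈ Finset.range p, μ {ω | S k ω < ε * δ k} :=
            le_trans (measure_mono hsub) (measure_biUnion_finset_le _ _)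
        _ ≤ ∑ k ∈ Finset.range p, ENNReal.ofReal (C * (ε * δ k) ^ 2) := by
            refine Finset.sum_le_sum fun k _ => hest k _ (mul_pos hε (hδpos k)) ?_
            nlinarith [hδpos k]
        _ = ENNReal.ofReal (∑ k ∈ Finset.range p, C * (ε * δ k) ^ 2) := by
            rw [ENNReal.ofReal_sum_of_nonneg
              (fun k _ => mul_nonneg hC (sq_nonneg _))]
        _ ≤ ENNReal.ofReal (C * ε ^ 2 * T) := by
            apply ENNReal.ofReal_le_ofReal
            have : ∑ k ∈ Finset.range p, C * (ε * δ k) ^ 2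
                = C * ε ^ 2 * ∑ k ∈ Finset.range p, (δ k) ^ 2 := by
              rw [Finset.mul_sum]; congr 1; ext k; ring
            rw [this]
            exact mul_le_mul_of_nonneg_left
              (Summable.sum_le_tsum _ (fun k _ => sq_nonneg _) hδsq)
              (by positivity)
    -- let ε → 0
    refine le_antisymm ?_ zero_le
    refine ENNReal.le_of_forall_pos_le_add fun η hη _ => ?_
    rw [zero_add]
    set ε : ℝ := min (1/2) (Real.sqrt (η / (C * T + 1))) with hεdef
    have hηpos : (0:ℝ) < η := hη
    have hCT : (0:ℝ) < C * T + 1 := by positivity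
    have hεpos : 0 < ε := lt_min (by norm_num) (Real.sqrt_pos.mpr (by positivity))
    have hε1 : ε < 1 := lt_of_le_of_lt (min_le_left _ _) (by norm_num)
    refine le_trans (key ε hεpos hε1) ?_
    have hsq : ε ^ 2 ≤ η / (C * T + 1) := by
      have h1 : ε ≤ Real.sqrt (η / (C * T + 1)) := min_le_right _ _
      have h2 : ε ^ 2 ≤ Real.sqrt (η / (C * T + 1)) ^ 2 :=
        pow_le_pow_left₀ hεpos.le h1 2
      rwa [Real.sq_sqrt (by positivity)] at h2
    have : C * ε ^ 2 * T ≤ (η : ℝ) := by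
      have hCTnn : 0 ≤ C * T := mul_nonneg hC hTnn
      have h3 : C * T * (ε ^ 2) ≤ C * T * (η / (C * T + 1)) :=
        mul_le_mul_of_nonneg_left hsq hCTnn
      have h4 : C * T * (η / (C * T + 1)) ≤ η := by
        rw [div_eq_mul_inv]
        rw [← mul_assoc]
        rw [mul_comm (C*T) (η:ℝ)]
        rw [mul_assoc]
        have : C * T * (C * T + 1)⁻¹ ≤ 1 := by
          rw [mul_inv_le_iff₀ hCT]; linarith
        nlinarith
      nlinarith
    exact le_trans (ENNReal.ofReal_le_ofReal this)
      (le_of_eq ENNReal.ofReal_coe_nnreal)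
  refine ⟨main, ?_⟩
  rw [ae_iff]
  have hsub : {ω | ¬ ∑' k, ENNReal.ofReal (S k ω) = ⊤}
      ⊆ ⋃ n : ℕ, {ω | ∑' k, ENNReal.ofReal (S k ω) < ENNReal.ofReal (n + 1)} := by
    intro ω hω
    simp only [Set.mem_setOf_eq] at hω
    obtain ⟨r, hr⟩ := ENNReal.lt_iff_exists_real_btwn.mp (lt_top_iff_ne_top.mpr hω)
    obtain ⟨n, hn⟩ := exists_nat_gt r
    refine Set.mem_iUnion.mpr ⟨n, ?_⟩
    simp only [Set.mem_setOf_eq]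
    refine hr.2.1.trans_le (ENNReal.ofReal_le_ofReal ?_)
    push_cast
    linarith
  refine le_antisymm ?_ zero_le
  refine le_trans (measure_mono hsub) ?_
  refine le_trans (measure_iUnion_le _) ?_
  have hz : ∀ n : ℕ, μ {ω | ∑' k, ENNReal.ofReal (S k ω) < ENNReal.ofReal ((n:ℝ) + 1)} = 0 :=
    fun n => main _ (by positivity)
  simp [hz]
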